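/- Assume q ≡ 1 (mod 4) and q ≢ 1 (mod 3). For every λ ∈ E with λ ≠ 0, the number of nonzero y ∈ E with T(λ·y²) = 0 is exactly q² − 1. Equivalently, the quadratic form y ↦ T(λ·y²) on E, viewed as a 3-dimensional F-vector space, has exactly q + 1 isotropic projective points, and hence is nondegenerate (its set of isotropic points is a nondegenerate conic). -/

import Mathlib

open scoped Classical

open Finset Polynomial in
private lemma card_eval_zero_le' {E : Type*} [Field E] [Fintype E]
    (f : Polynomial E) (hf : f ≠ 0) :
    (Finset.univ.filter fun x : E => f.eval x = 0).card ≤ f.natDegree := by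
  classical
  have hsub : (Finset.univ.filter fun x : E => f.eval x = 0) ⊆ f.roots.toFinset := by
    intro x hx
    rw [Finset.mem_filter] at hx
    rw [Multiset.mem_toFinset, Polynomial.mem_roots hf]
    exact hx.2
  calc (Finset.univ.filter fun x : E => f.eval x = 0).card
      ≤ f.roots.toFinset.card := Finset.card_le_card hsub
    _ ≤ Multiset.card f.roots := Multiset.toFinset_card_le _
    _ ≤ f.natDegree := f.card_roots'

/-- Let `q = p^h` be a prime power with `q ≡ 1 (mod 4)` and
`q ≢ 1 (mod 3)`, `E = 𝔽_{q³}` and `T x = x^{q²} + x^q + x` the relative trace.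
For every nonzero `λ ∈ E`, the number of nonzero `y ∈ E` with `T(λ·y²) = 0` is
exactly `q² − 1` (equivalently, the quadratic form `y ↦ T(λ·y²)` on `E`, a
3-dimensional `F`-space, has exactly `q + 1` isotropic projective points: its
isotropic points form a nondegenerate conic). -/
theorem stmt_5 {p h q : ℕ} (hp : p.Prime) (hh : 0 < h) (hq : q = p ^ h)
    (hq4 : q % 4 = 1) (hq3 : q % 3 ≠ 1)
    {E : Type*} [Field E] [Fintype E] (hE : Fintype.card E = q ^ 3)
    (T : E → E) (hT : ∀ x, T x = x ^ q ^ 2 + x ^ q + x) :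
    ∀ lam : E, lam ≠ 0 →
      (Finset.univ.filter fun y : E => y ≠ 0 ∧ T (lam * y ^ 2) = 0).card
        = q ^ 2 - 1 := by
  classical
  intro lam hlam
  -- numerics
  have hq1 : 1 < q := by
    rw [hq]; exact Nat.one_lt_pow hh.ne' hp.one_lt
  have hq0 : 0 < q := by omega
  have hqodd : q % 2 = 1 := by omega
  -- characteristic of E is p
  have hpq : p ∣ q := by rw [hq]; exact dvd_pow_self p hh.ne'
  have hcharP : CharP E p := by
    have h1 : CharP E (ringChar E) := ringChar.charP E
    obtain ⟨n, hrp, hcard⟩ := FiniteField.card E (ringChar E)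
    have h2 : p ∣ (ringChar E) ^ (n : ℕ) := by
      rw [← hcard, hE, hq]
      exact dvd_pow (dvd_pow_self p hh.ne') (by positivity)
    have h3 : p = ringChar E := by
      have := hp.dvd_of_dvd_pow h2
      exact ((Nat.prime_dvd_prime_iff_eq hp hrp).mp this)
    rwa [h3]
  haveI := hcharP
  haveI : Fact p.Prime := ⟨hp⟩
  have hp2 : p ≠ 2 := by
    intro hp2
    have : 2 ∣ q := by rw [← hp2]; exact hpq
    omega
  have hring2 : ringChar E ≠ 2 := by
    rw [ringChar.eq E p]; exact hp2
  -- Frobenius identities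
  have hq2 : q ^ 2 = p ^ (2 * h) := by rw [hq, ← pow_mul, mul_comm]
  have hadd : ∀ a b : E, (a + b) ^ q = a ^ q + b ^ q := by
    intro a b; rw [hq]; exact add_pow_char_pow ..
  have hadd2 : ∀ a b : E, (a + b) ^ q ^ 2 = a ^ q ^ 2 + b ^ q ^ 2 := by
    intro a b; rw [hq2]; exact add_pow_char_pow ..
  have hsub : ∀ a b : E, (a - b) ^ q = a ^ q - b ^ q := by
    intro a b; rw [hq]; exact sub_pow_char_pow ..
  have hsub2 : ∀ a b : E, (a - b) ^ q ^ 2 = a ^ q ^ 2 - b ^ q ^ 2 := by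
    intro a b; rw [hq2]; exact sub_pow_char_pow ..
  have hq3pow : ∀ a : E, a ^ q ^ 3 = a := by
    intro a
    have := FiniteField.pow_card a
    rwa [hE] at this
  -- T is additive etc.
  have Tadd : ∀ u v : E, T (u + v) = T u + T v := by
    intro u v; simp only [hT, hadd, hadd2]; ring
  have Tsub : ∀ u v : E, T (u - v) = T u - T v := by
    intro u v; simp only [hT, hsub, hsub2]; ring
  have Tzero : T 0 = 0 := by
    simp [hT, zero_pow, hq0.ne', (by positivity : 0 < q ^ 2).ne']
  have Tsmul : ∀ t x : E, t ^ q = t → T (t * x) = t * T x := by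
    intro t x ht
    have ht2 : t ^ q ^ 2 = t := by
      rw [pow_two, pow_mul, ht, ht]
    rw [hT, hT, mul_pow, mul_pow, ht, ht2]; ring
  have hTfix : ∀ w : E, (T w) ^ q = T w := by
    intro w
    rw [hT, hadd, hadd, ← pow_mul, ← pow_mul]
    have e1 : q ^ 2 * q = q ^ 3 := by ring
    have e2 : q * q = q ^ 2 := by ring
    rw [e1, e2, hq3pow]; ring
  -- the kernel K of x ↦ T (lam * x)
  set K : Finset E := Finset.univ.filter fun x : E => T (lam * x) = 0 with hK
  -- upper bound : |K| ≤ q^2 via polynomial roots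
  have hKle : K.card ≤ q ^ 2 := by
    set f : Polynomial E :=
      Polynomial.C (lam ^ q ^ 2) * Polynomial.X ^ q ^ 2
        + Polynomial.C (lam ^ q) * Polynomial.X ^ q
        + Polynomial.C lam * Polynomial.X ^ 1 with hf
    have heval : ∀ x : E, f.eval x = T (lam * x) := by
      intro x
      simp [hf, hT, mul_pow]
    have hfne : f ≠ 0 := by
      intro h0
      have hc : f.coeff (q ^ 2) = lam ^ q ^ 2 := by
        have hne1 : q ≠ q ^ 2 := by nlinarith
        have hne2 : 1 ≠ q ^ 2 := by nlinarith
        rw [hf, Polynomial.coeff_add, Polynomial.coeff_add, Polynomial.coeff_C_mul_X_pow,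
          Polynomial.coeff_C_mul_X_pow, Polynomial.coeff_C_mul_X_pow,
          if_pos rfl, if_neg (Ne.symm hne1), if_neg (Ne.symm hne2)]
        ring
      rw [h0] at hc
      simp at hc
      exact hlam (pow_eq_zero_iff (by positivity : 0 < q^2).ne' |>.mp hc.symm)
    have hdeg : f.natDegree ≤ q ^ 2 := by
      refine le_trans (Polynomial.natDegree_add_le _ _) ?_
      refine max_le (le_trans (Polynomial.natDegree_add_le _ _) ?_) ?_
      · exact max_le (Polynomial.natDegree_C_mul_X_pow_le _ _)
          (le_trans (Polynomial.natDegree_C_mul_X_pow_le _ _) (by nlinarith))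
      · exact le_trans (Polynomial.natDegree_C_mul_X_pow_le _ _) (by nlinarith)
    have : K = Finset.univ.filter fun x : E => f.eval x = 0 := by
      ext x; simp [hK, heval]
    rw [this]
    exact le_trans (card_eval_zero_le' f hfne) hdeg
  -- upper bound : |fixed points of Frobenius| ≤ q
  have hFixle : (Finset.univ.filter fun c : E => c ^ q = c).card ≤ q := by
    set g : Polynomial E := Polynomial.X ^ q - Polynomial.X ^ 1 with hg
    have heval : ∀ x : E, g.eval x = x ^ q - x := by intro x; simp [hg]
    have hgne : g ≠ 0 := by
      intro h0
      have hc : g.coeff q = 1 := by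
        have hne1 : ¬ (q = 1) := by omega
        simp [hg, Polynomial.coeff_X_pow, Polynomial.coeff_X, if_neg hne1]
        omega
      rw [h0] at hc
      simp at hc
    have hdeg : g.natDegree ≤ q := by
      refine le_trans (Polynomial.natDegree_sub_le _ _) ?_
      simp [Polynomial.natDegree_X_pow]
      omega
    have : (Finset.univ.filter fun c : E => c ^ q = c)
        = Finset.univ.filter fun x : E => g.eval x = 0 := by
      ext x; simp [heval, sub_eq_zero]
    rw [this]
    exact le_trans (card_eval_zero_le' g hgne) hdeg
  -- lower bound for |K| by fiber counting
  have hKge : q ^ 2 ≤ K.card := by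
    set L : E → E := fun x => T (lam * x) with hL
    set I : Finset E := Finset.image L Finset.univ with hI
    have hIle : I.card ≤ q := by
      refine le_trans (Finset.card_le_card ?_) hFixle
      intro c hc
      rw [hI, Finset.mem_image] at hc
      obtain ⟨x, -, rfl⟩ := hc
      simp only [Finset.mem_filter, Finset.mem_univ, true_and]
      exact hTfix _
    have hfib : ∀ c ∈ I, (Finset.univ.filter fun x : E => L x = c).card ≤ K.card := by
      intro c hc
      rw [hI, Finset.mem_image] at hc
      obtain ⟨x₀, -, hx₀⟩ := hc
      refine Finset.card_le_card_of_injOn (fun x => x - x₀) ?_ ?_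
      · intro x hx
        rw [Finset.mem_coe, Finset.mem_filter] at hx
        rw [hK, Finset.mem_coe, Finset.mem_filter]
        refine ⟨Finset.mem_univ _, ?_⟩
        have hxx : T (lam * x) = c := hx.2
        have hxx0 : T (lam * x₀) = c := hx₀
        have : lam * (x - x₀) = lam * x - lam * x₀ := by ring
        rw [this, Tsub, hxx, hxx0, sub_self]
      · intro a _ b _ hab
        simpa using hab
    have hcardsum : Finset.univ.card = ∑ c ∈ I, (Finset.univ.filter fun x : E => L x = c).card :=
      Finset.card_eq_sum_card_fiberwise (fun x _ => Finset.mem_image_of_mem L (Finset.mem_univ x))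
    have h1 : q ^ 3 ≤ I.card * K.card := by
      calc q ^ 3 = Fintype.card E := hE.symm
        _ = Finset.univ.card := rfl
        _ = ∑ c ∈ I, (Finset.univ.filter fun x : E => L x = c).card := hcardsum
        _ ≤ ∑ _c ∈ I, K.card := Finset.sum_le_sum hfib
        _ = I.card * K.card := by rw [Finset.sum_const, smul_eq_mul]
    have h2 : q ^ 3 ≤ q * K.card := le_trans h1 (Nat.mul_le_mul_right _ hIle)
    have h3 : q * q ^ 2 ≤ q * K.card := by
      calc q * q ^ 2 = q ^ 3 := by ring
        _ ≤ q * K.card := h2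
    exact Nat.le_of_mul_le_mul_left h3 hq0
  have hKcard : K.card = q ^ 2 := le_antisymm hKle hKge
  -- the punctured kernel S
  set S : Finset E := K.erase 0 with hS
  have h0K : (0 : E) ∈ K := by
    rw [hK, Finset.mem_filter]
    exact ⟨Finset.mem_univ _, by rw [mul_zero, Tzero]⟩
  have hScard : S.card = q ^ 2 - 1 := by
    rw [hS, Finset.card_erase_of_mem h0K, hKcard]
  -- a nonsquare t₀ in F^×
  obtain ⟨g, hg⟩ := IsCyclic.exists_generator (α := Eˣ)
  have hcardU : Fintype.card Eˣ = q ^ 3 - 1 := by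
    rw [Fintype.card_units, hE]
  have hgord : orderOf g = q ^ 3 - 1 := by
    rw [orderOf_eq_card_of_forall_mem_zpowers hg, Nat.card_eq_fintype_card, hcardU]
  have hq3big : 8 ≤ q ^ 3 := by nlinarith
  have hn1 : 2 ≤ q ^ 3 - 1 := by omega
  have hq3odd : q ^ 3 % 2 = 1 := by
    simp [Nat.pow_mod, hqodd]
  have hneven : 2 ∣ q ^ 3 - 1 := by omega
  -- g is not a square in Eˣ
  have hgns : ¬ IsSquare g := by
    rintro ⟨b, hb⟩
    have hb1 : g ^ ((q ^ 3 - 1) / 2) = 1 := by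
      rw [hb, ← pow_two, ← pow_mul]
      have : 2 * ((q ^ 3 - 1) / 2) = q ^ 3 - 1 := Nat.two_mul_div_two_of_even (even_iff_two_dvd.mpr hneven)
      rw [this, ← hcardU]
      exact pow_card_eq_one
    have hdvd : orderOf g ∣ (q ^ 3 - 1) / 2 := orderOf_dvd_of_pow_eq_one hb1
    rw [hgord] at hdvd
    have := Nat.le_of_dvd (by omega) hdvd
    omega
  have hgnsE : ¬ IsSquare ((g : Eˣ) : E) := by
    rintro ⟨c, hc⟩
    apply hgns
    have hc0 : c ≠ 0 := by
      intro h0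
      rw [h0, mul_zero] at hc
      exact g.ne_zero hc
    refine ⟨Units.mk0 c hc0, ?_⟩
    ext
    simpa using hc
  set χ := quadraticChar E with hχ
  have hχg : χ ((g : Eˣ) : E) = -1 := quadraticChar_neg_one_iff_not_isSquare.mpr hgnsE
  -- the element t₀
  set t₀ : E := ((g : Eˣ) : E) ^ (q ^ 2 + q + 1) with ht₀
  have ht₀0 : t₀ ≠ 0 := pow_ne_zero _ g.ne_zero
  have hexp : (q ^ 2 + q + 1) * (q - 1) = q ^ 3 - 1 := by
    obtain ⟨m, rfl⟩ : ∃ m, q = m + 1 := ⟨q - 1, by omega⟩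
    simp only [Nat.add_sub_cancel]
    ring_nf
    omega
  have ht₀pow : t₀ ^ (q - 1) = 1 := by
    rw [ht₀, ← pow_mul, hexp]
    have : ((g : Eˣ) : E) ^ (q ^ 3 - 1) = ((g ^ (q ^ 3 - 1) : Eˣ) : E) := by
      simp
    rw [this, ← hgord, pow_orderOf_eq_one]
    simp
  have ht₀fix : t₀ ^ q = t₀ := by
    have : q = (q - 1) + 1 := by omega
    rw [this, pow_succ, ht₀pow, one_mul]
  have hoddexp : Odd (q ^ 2 + q + 1) := by
    have h1 : q ^ 2 % 2 = 1 := by simp [Nat.pow_mod, hqodd]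
    rw [Nat.odd_iff]; omega
  have hχt₀ : χ t₀ = -1 := by
    rw [ht₀, map_pow, hχg, hoddexp.neg_one_pow]
  -- t₀ stabilizes S
  have hstab : ∀ t : E, t ≠ 0 → t ^ q = t → ∀ x ∈ S, t * x ∈ S := by
    intro t ht0 htf x hx
    rw [hS, Finset.mem_erase, hK, Finset.mem_filter] at hx ⊢
    refine ⟨mul_ne_zero ht0 hx.1, Finset.mem_univ _, ?_⟩
    have : lam * (t * x) = t * (lam * x) := by ring
    rw [this, Tsmul _ _ htf, hx.2.2, mul_zero]
  -- the character sum over S vanishes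
  have hSsum : ∑ x ∈ S, χ x = 0 := by
    have hreindex : ∑ x ∈ S, χ x = ∑ x ∈ S, χ (t₀ * x) := by
      refine (Finset.sum_nbij' (fun x => t₀ * x) (fun x => t₀⁻¹ * x) ?_ ?_ ?_ ?_ ?_).symm
      · intro x hx; exact hstab t₀ ht₀0 ht₀fix x hx
      · intro x hx
        refine hstab t₀⁻¹ (inv_ne_zero ht₀0) ?_ x hx
        rw [inv_pow, ht₀fix]
      · intro x _; field_simp
      · intro x _; field_simp
      · intro x _; rfl
    have hmul : ∑ x ∈ S, χ (t₀ * x) = - ∑ x ∈ S, χ x := by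
      rw [← Finset.sum_neg_distrib]
      refine Finset.sum_congr rfl ?_
      intro x _
      rw [map_mul, hχt₀]; ring
    have := hreindex.trans hmul
    linarith
  -- final count : fiberwise over y ↦ y²
  set Y : Finset E := Finset.univ.filter fun y : E => y ≠ 0 ∧ T (lam * y ^ 2) = 0 with hY
  have hmap : ∀ y ∈ Y, y ^ 2 ∈ S := by
    intro y hy
    rw [hY, Finset.mem_filter] at hy
    rw [hS, Finset.mem_erase, hK, Finset.mem_filter]
    exact ⟨pow_ne_zero _ hy.2.1, Finset.mem_univ _, hy.2.2⟩
  have hYcard : Y.card = ∑ x ∈ S, (Y.filter fun y => y ^ 2 = x).card :=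
    Finset.card_eq_sum_card_fiberwise hmap
  have hfibeq : ∀ x ∈ S, (Y.filter fun y => y ^ 2 = x)
      = Finset.univ.filter fun y : E => y ^ 2 = x := by
    intro x hx
    rw [hS, Finset.mem_erase, hK, Finset.mem_filter] at hx
    ext y
    simp only [Finset.mem_filter, hY, Finset.mem_univ, true_and]
    constructor
    · rintro ⟨-, hyx⟩; exact hyx
    · intro hyx
      refine ⟨⟨?_, ?_⟩, hyx⟩
      · intro h0; rw [h0] at hyx; simp at hyx; exact hx.1 hyx.symm
      · rw [hyx]; exact hx.2.2
  have hcount : ∀ x ∈ S,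
      ((Finset.univ.filter fun y : E => y ^ 2 = x).card : ℤ) = χ x + 1 := by
    intro x _
    have h2 := quadraticChar_card_sqrts hring2 x
    have h3 : {y : E | y ^ 2 = x}.toFinset = Finset.univ.filter fun y : E => y ^ 2 = x := by
      ext y; simp
    rw [h3] at h2
    exact h2
  have hZ : (Y.card : ℤ) = (q ^ 2 - 1 : ℕ) := by
    rw [hYcard, Nat.cast_sum]
    calc ∑ x ∈ S, ((Y.filter fun y => y ^ 2 = x).card : ℤ)
        = ∑ x ∈ S, (χ x + 1) := by
          refine Finset.sum_congr rfl ?_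
          intro x hx
          rw [hfibeq x hx, hcount x hx]
      _ = (∑ x ∈ S, χ x) + S.card := by
          rw [Finset.sum_add_distrib, Finset.sum_const]
          simp
      _ = S.card := by rw [hSsum, zero_add]
      _ = ((q ^ 2 - 1 : ℕ) : ℤ) := by rw [hScard]
  exact_mod_cast hZ
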